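/- Let G be a locally compact Hausdorff unimodular topological group with Haar measure μ, K a compact open subgroup of G with Haar probability measure dk, and S a countable subset of G such that G is the disjoint union of the double cosets KmK for m ∈ S. Then for every f ∈ L¹(G, μ), ∫_G f(x) dμ(x) = Σ_{m ∈ S} μ(KmK) · ∫_K ∫_K f(k₁ m k₂) dk₁ dk₂, with the sum converging absolutely. -/

import Mathlib

open MeasureTheory

open scoped NNReal ENNReal Function



private lemma comap_val_eq
    {G : Type*} [Group G] [TopologicalSpace G] [IsTopologicalGroup G]
    [T2Space G] [LocallyCompactSpace G]
    [MeasurableSpace G] [BorelSpace G]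
    (μ : Measure G) [μ.IsHaarMeasure]
    (K : Subgroup G) (hKcompact : IsCompact (K : Set G)) (hKopen : IsOpen (K : Set G))
    (ν : Measure K) [ν.IsHaarMeasure] [IsProbabilityMeasure ν] :
    μ.comap (Subtype.val : K → G) = μ (K : Set G) • ν := by
  haveI : CompactSpace K := isCompact_iff_compactSpace.mp hKcompact
  haveI : BorelSpace K := Subtype.borelSpace (K : Set G)
  have hKm : MeasurableSet (K : Set G) := hKopen.measurableSet
  have hemb : MeasurableEmbedding (Subtype.val : K → G) := MeasurableEmbedding.subtype_coe hKm
  have hcomap : ∀ s : Set K, MeasurableSet s →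
      μ.comap Subtype.val s = μ (Subtype.val '' s) := fun s hs =>
    Measure.comap_apply _ Subtype.val_injective
      (fun t ht => hemb.measurableSet_image' ht) μ hs
  have huniv : μ.comap (Subtype.val : K → G) Set.univ = μ (K : Set G) := by
    rw [hcomap _ MeasurableSet.univ, Set.image_univ, Subtype.range_val]
  haveI : IsFiniteMeasure (μ.comap (Subtype.val : K → G)) := by
    constructor
    rw [huniv]
    exact hKcompact.measure_lt_top
  haveI : (μ.comap (Subtype.val : K → G)).IsMulLeftInvariant := by
    constructor
    intro g
    ext s hs
    have hset : (Subtype.val '' ((fun x => g * x) ⁻¹' s) : Set G)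
        = (fun x => (g : G) * x) ⁻¹' (Subtype.val '' s) := by
      ext x
      simp only [Set.mem_image, Set.mem_preimage]
      constructor
      · rintro ⟨k, hk, rfl⟩
        exact ⟨g * k, hk, rfl⟩
      · rintro ⟨k, hks, hkx⟩
        refine ⟨g⁻¹ * k, by simpa using hks, ?_⟩
        have h1 : ((g⁻¹ * k : K) : G) = (g : G)⁻¹ * (k : G) := rfl
        rw [h1, hkx, inv_mul_cancel_left]
    rw [Measure.map_apply (measurable_const_mul g) hs,
        hcomap _ (measurable_const_mul g hs), hset, measure_preimage_mul,
        ← hcomap s hs]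
  have huniq := Measure.isMulInvariant_eq_smul_of_compactSpace
    (μ.comap (Subtype.val : K → G)) ν
  have hval : ((Measure.haarScalarFactor (μ.comap (Subtype.val : K → G)) ν : ℝ≥0) : ℝ≥0∞)
      = μ (K : Set G) := by
    have h1 := congrArg (fun m : Measure K => m Set.univ) huniq
    simp only [Measure.smul_apply, measure_univ, smul_eq_mul, mul_one, huniv,
      ENNReal.smul_def] at h1
    exact h1.symm
  rw [huniq]
  ext s hs
  simp [Measure.smul_apply, ENNReal.smul_def, hval]

private lemma integral_coset
    {G : Type*} [Group G] [TopologicalSpace G] [IsTopologicalGroup G]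
    [T2Space G] [LocallyCompactSpace G]
    [MeasurableSpace G] [BorelSpace G]
    (μ : Measure G) [μ.IsHaarMeasure]
    (K : Subgroup G) (hKcompact : IsCompact (K : Set G)) (hKopen : IsOpen (K : Set G))
    (ν : Measure K) [ν.IsHaarMeasure] [IsProbabilityMeasure ν]
    (f : G → ℂ) (c : G) :
    ∫ x in (fun y => c⁻¹ * y) ⁻¹' (K : Set G), f x ∂μ
      = (μ (K : Set G)).toReal • ∫ k : K, f (c * ↑k) ∂ν := by
  have hKm : MeasurableSet (K : Set G) := hKopen.measurableSet
  have h1 : ∫ x in (fun y => c⁻¹ * y) ⁻¹' (K : Set G), f x ∂μ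
      = ∫ x in (K : Set G), f (c * x) ∂μ := by
    have h := (measurePreserving_mul_left μ c).setIntegral_preimage_emb
      (MeasurableEquiv.mulLeft c).measurableEmbedding f ((fun y => c⁻¹ * y) ⁻¹' (K : Set G))
    have hset : (fun x => c * x) ⁻¹' ((fun y => c⁻¹ * y) ⁻¹' (K : Set G)) = (K : Set G) := by
      ext x
      simp [Set.mem_preimage, inv_mul_cancel_left]
    rw [← h, hset]
  have h2 : ∫ x in (K : Set G), f (c * x) ∂μ
      = ∫ k : K, f (c * ↑k) ∂(μ.comap (Subtype.val : K → G)) :=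
    (integral_subtype_comap hKm _).symm
  rw [h1, h2, comap_val_eq μ K hKcompact hKopen ν, integral_smul_measure]

private lemma key_double_coset
    {G : Type*} [Group G] [TopologicalSpace G] [IsTopologicalGroup G]
    [T2Space G] [LocallyCompactSpace G]
    [MeasurableSpace G] [BorelSpace G]
    (μ : Measure G) [μ.IsHaarMeasure]
    (K : Subgroup G) (hKcompact : IsCompact (K : Set G)) (hKopen : IsOpen (K : Set G))
    (ν : Measure K) [ν.IsHaarMeasure] [IsProbabilityMeasure ν]
    (f : G → ℂ) (hf : Integrable f μ) (m : G) :
    ∫ x in {x : G | ∃ k₁ ∈ K, ∃ k₂ ∈ K, x = k₁ * m * k₂}, f x ∂μ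
      = ((μ {x : G | ∃ k₁ ∈ K, ∃ k₂ ∈ K, x = k₁ * m * k₂}).toReal : ℂ)
          * ∫ k₁ : K, ∫ k₂ : K, f ((k₁ : G) * m * (k₂ : G)) ∂ν ∂ν := by
  haveI : BorelSpace K := Subtype.borelSpace (K : Set G)
  have hKm : MeasurableSet (K : Set G) := hKopen.measurableSet
  have hemb : MeasurableEmbedding (Subtype.val : K → G) := MeasurableEmbedding.subtype_coe hKm
  have haK0 : μ (K : Set G) ≠ 0 := hKopen.measure_ne_zero μ ⟨1, K.one_mem⟩
  have haKt : μ (K : Set G) ≠ ⊤ := hKcompact.measure_lt_top.ne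
  set a : ℝ := (μ (K : Set G)).toReal with ha_def
  have ha : a ≠ 0 := ENNReal.toReal_ne_zero.mpr ⟨haK0, haKt⟩
  set D : Set G := {x : G | ∃ k₁ ∈ K, ∃ k₂ ∈ K, x = k₁ * m * k₂} with hD_def
  -- fibers of the quotient map are cosets
  have hcoset_preim : ∀ x : G,
      (QuotientGroup.mk ⁻¹' {(QuotientGroup.mk x : G ⧸ K)} : Set G)
        = (fun y => x⁻¹ * y) ⁻¹' (K : Set G) := by
    intro x
    ext y
    simp only [Set.mem_preimage, Set.mem_singleton_iff, SetLike.mem_coe]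
    rw [eq_comm, QuotientGroup.eq]
  have hfiber_open : ∀ q : G ⧸ K, IsOpen (QuotientGroup.mk ⁻¹' {q} : Set G) := by
    intro q
    obtain ⟨x, rfl⟩ := QuotientGroup.mk_surjective q
    rw [hcoset_preim]
    exact hKopen.preimage (continuous_const.mul continuous_id)
  have hfiber_meas : ∀ q : G ⧸ K, MeasurableSet (QuotientGroup.mk ⁻¹' {q} : Set G) :=
    fun q => (hfiber_open q).measurableSet
  have hfiber_measure : ∀ x : G,
      μ (QuotientGroup.mk ⁻¹' {(QuotientGroup.mk x : G ⧸ K)} : Set G) = μ (K : Set G) := by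
    intro x
    rw [hcoset_preim]
    exact measure_preimage_mul μ x⁻¹ _
  -- D is compact
  have hD_image : D = (fun p : G × G => p.1 * m * p.2) '' ((K : Set G) ×ˢ (K : Set G)) := by
    ext x
    constructor
    · rintro ⟨k₁, h1, k₂, h2, rfl⟩
      exact ⟨(k₁, k₂), ⟨h1, h2⟩, rfl⟩
    · rintro ⟨⟨k₁, k₂⟩, ⟨h1, h2⟩, rfl⟩
      exact ⟨k₁, h1, k₂, h2, rfl⟩
  have hDcompact : IsCompact D := by
    rw [hD_image]
    exact (hKcompact.prod hKcompact).image (by fun_prop)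
  have hDr : ∀ x ∈ D, ∀ k ∈ K, x * k ∈ D := by
    rintro x ⟨k₁, h1, k₂, h2, rfl⟩ k hk
    exact ⟨k₁, h1, k₂ * k, K.mul_mem h2 hk, by rw [mul_assoc]⟩
  -- the finite set of left cosets covering D
  have hself : ∀ x : G, x ∈ (QuotientGroup.mk ⁻¹' {(QuotientGroup.mk x : G ⧸ K)} : Set G) :=
    fun x => rfl
  obtain ⟨t, ht⟩ := hDcompact.elim_finite_subcover
    (fun x : D => (QuotientGroup.mk ⁻¹' {(QuotientGroup.mk (x : G) : G ⧸ K)} : Set G))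
    (fun x => hfiber_open _)
    (fun x hx => Set.mem_iUnion.2 ⟨⟨x, hx⟩, hself x⟩)
  have hVfin : (QuotientGroup.mk '' D : Set (G ⧸ K)).Finite := by
    apply Set.Finite.subset (t.finite_toSet.image (fun x : D => (QuotientGroup.mk (x : G) : G ⧸ K)))
    rintro q ⟨x, hx, rfl⟩
    obtain ⟨i, hit, hxi⟩ := Set.mem_iUnion₂.1 (ht hx)
    have hxi' : (QuotientGroup.mk x : G ⧸ K) = QuotientGroup.mk (i : G) := hxi
    exact ⟨i, hit, hxi'.symm⟩
  set Vf : Finset (G ⧸ K) := hVfin.toFinset with hVf_def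
  have hmk_mem : ∀ x ∈ D, (QuotientGroup.mk x : G ⧸ K) ∈ Vf :=
    fun x hx => hVfin.mem_toFinset.2 ⟨x, hx, rfl⟩
  have hD_eq : D = ⋃ q ∈ Vf, (QuotientGroup.mk ⁻¹' {q} : Set G) := by
    ext x
    simp only [Set.mem_iUnion, Set.mem_preimage, Set.mem_singleton_iff]
    constructor
    · intro hx
      exact ⟨QuotientGroup.mk x, hmk_mem x hx, rfl⟩
    · rintro ⟨q, hq, rfl⟩
      obtain ⟨x₀, hx₀D, hx₀⟩ := hVfin.mem_toFinset.1 hq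
      have hk : x₀⁻¹ * x ∈ K := QuotientGroup.eq.1 hx₀
      have := hDr x₀ hx₀D (x₀⁻¹ * x) hk
      simpa [mul_inv_cancel_left] using this
  have hdisjVf : (↑Vf : Set (G ⧸ K)).Pairwise
      (Disjoint on fun q => (QuotientGroup.mk ⁻¹' {q} : Set G)) := by
    intro q hq q' hq' hne
    simp only [Function.onFun]
    apply Set.disjoint_left.2
    intro x hxq hxq'
    have h1 : (QuotientGroup.mk x : G ⧸ K) = q := hxq
    have h2 : (QuotientGroup.mk x : G ⧸ K) = q' := hxq'
    exact hne (h1.symm.trans h2)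
  have hμD : μ D = (Vf.card : ℝ≥0∞) * μ (K : Set G) := by
    rw [hD_eq, measure_biUnion_finset hdisjVf (fun q _ => hfiber_meas q)]
    have hconst : ∀ q ∈ Vf, μ (QuotientGroup.mk ⁻¹' {q} : Set G) = μ (K : Set G) := by
      intro q _
      obtain ⟨x, rfl⟩ := QuotientGroup.mk_surjective q
      exact hfiber_measure x
    rw [Finset.sum_congr rfl hconst, Finset.sum_const, nsmul_eq_mul]
  have hsplit : ∫ x in D, f x ∂μ
      = ∑ q ∈ Vf, ∫ x in (QuotientGroup.mk ⁻¹' {q} : Set G), f x ∂μ := by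
    rw [hD_eq]
    exact integral_biUnion_finset Vf (fun q _ => hfiber_meas q) hdisjVf
      (fun q _ => hf.integrableOn)
  -- the sets U q
  set U : G ⧸ K → Set K :=
    fun q => (fun k : K => (QuotientGroup.mk ((k : G) * m) : G ⧸ K)) ⁻¹' {q} with hU_def
  have hU_meas : ∀ q, MeasurableSet (U q) := by
    intro q
    have hUq : U q = Subtype.val ⁻¹' ((fun x : G => x * m) ⁻¹' (QuotientGroup.mk ⁻¹' {q})) := rfl
    rw [hUq]
    exact (((hfiber_open q).preimage (continuous_mul_right m)).preimage
      continuous_subtype_val).measurableSet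
  have hUcover : ∀ k : K, (QuotientGroup.mk ((k : G) * m) : G ⧸ K) ∈ Vf := by
    intro k
    exact hmk_mem _ ⟨(k : G), k.2, 1, K.one_mem, by simp⟩
  -- value of the inner integral
  have hF : ∀ k₁ : K, (∫ k₂ : K, f ((k₁ : G) * m * (k₂ : G)) ∂ν)
      = a⁻¹ • ∫ x in (QuotientGroup.mk ⁻¹' {(QuotientGroup.mk ((k₁ : G) * m) : G ⧸ K)} : Set G),
          f x ∂μ := by
    intro k₁
    have h := integral_coset μ K hKcompact hKopen ν f ((k₁ : G) * m)
    rw [hcoset_preim, h, smul_smul, inv_mul_cancel₀ ha, one_smul]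
  -- measure of U q
  set W : Set G := (fun y => m⁻¹ * y * m) ⁻¹' (K : Set G) with hW_def
  have hcomapν := comap_val_eq μ K hKcompact hKopen ν
  have hνU : ∀ q ∈ Vf, ν (U q) = (μ (K : Set G))⁻¹ * μ ((K : Set G) ∩ W) := by
    intro q hq
    obtain ⟨x₀, hx₀D, hx₀q⟩ := hVfin.mem_toFinset.1 hq
    obtain ⟨k₁, hk₁, k₂, hk₂, rfl⟩ := hx₀D
    have hginv : (k₁ * m)⁻¹ * (k₁ * m * k₂) = k₂ := by group
    have hq' : (QuotientGroup.mk (k₁ * m) : G ⧸ K) = q := by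
      rw [← hx₀q, QuotientGroup.eq, hginv]
      exact hk₂
    have himgU : Subtype.val '' (U q) = (fun x => k₁⁻¹ * x) ⁻¹' ((K : Set G) ∩ W) := by
      ext x
      simp only [Set.mem_image, Set.mem_preimage, Set.mem_inter_iff, SetLike.mem_coe, hW_def]
      constructor
      · rintro ⟨k, hk, rfl⟩
        have hk' : (QuotientGroup.mk ((k : G) * m) : G ⧸ K) = q := hk
        have hkk : ((k : G) * m)⁻¹ * (k₁ * m) ∈ K :=
          QuotientGroup.eq.1 (hk'.trans hq'.symm)
        constructor
        · exact K.mul_mem (K.inv_mem hk₁) k.2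
        · have hrw : m⁻¹ * (k₁⁻¹ * (k : G)) * m = (((k : G) * m)⁻¹ * (k₁ * m))⁻¹ := by group
          rw [hrw]
          exact K.inv_mem hkk
      · rintro ⟨hxK', hxW⟩
        have hxK : x ∈ K := by
          have := K.mul_mem hk₁ hxK'
          simpa [mul_inv_cancel_left] using this
        refine ⟨⟨x, hxK⟩, ?_, rfl⟩
        show (QuotientGroup.mk (x * m) : G ⧸ K) = q
        rw [← hq', QuotientGroup.eq]
        have hrw : (x * m)⁻¹ * (k₁ * m) = (m⁻¹ * (k₁⁻¹ * x) * m)⁻¹ := by group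
        rw [hrw]
        exact K.inv_mem hxW
    have hμU : (μ.comap (Subtype.val : K → G)) (U q) = μ ((K : Set G) ∩ W) := by
      rw [Measure.comap_apply _ Subtype.val_injective
        (fun s hs => hemb.measurableSet_image' hs) μ (hU_meas q), himgU,
        measure_preimage_mul]
    rw [hcomapν, Measure.smul_apply, smul_eq_mul] at hμU
    rw [← hμU, ← mul_assoc, ENNReal.inv_mul_cancel haK0 haKt, one_mul]
  -- counting
  have hUdisj : (↑Vf : Set (G ⧸ K)).Pairwise (Disjoint on U) := by
    intro q hq q' hq' hne
    simp only [Function.onFun]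
    apply Set.disjoint_left.2
    intro k hkq hkq'
    have h1 : (QuotientGroup.mk ((k : G) * m) : G ⧸ K) = q := hkq
    have h2 : (QuotientGroup.mk ((k : G) * m) : G ⧸ K) = q' := hkq'
    exact hne (h1.symm.trans h2)
  have hcount : (Vf.card : ℝ≥0∞) * ((μ (K : Set G))⁻¹ * μ ((K : Set G) ∩ W)) = 1 := by
    have huniv : (Set.univ : Set K) = ⋃ q ∈ Vf, U q := by
      ext k
      simp only [Set.mem_univ, true_iff, Set.mem_iUnion]
      exact ⟨_, hUcover k, rfl⟩
    have h1 : ν (Set.univ : Set K) = 1 := measure_univ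
    rw [huniv, measure_biUnion_finset hUdisj (fun q _ => hU_meas q),
      Finset.sum_congr rfl hνU, Finset.sum_const, nsmul_eq_mul] at h1
    exact h1
  -- real versions
  set b : ℝ := (μ ((K : Set G) ∩ W)).toReal with hb_def
  have hμD_toReal : (μ D).toReal = (Vf.card : ℝ) * a := by
    rw [hμD, ENNReal.toReal_mul, ENNReal.toReal_natCast]
  have hνU_toReal : ∀ q ∈ Vf, (ν (U q)).toReal = a⁻¹ * b := by
    intro q hq
    rw [hνU q hq, ENNReal.toReal_mul, ENNReal.toReal_inv]
  have hcountR : (Vf.card : ℝ) * (a⁻¹ * b) = 1 := by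
    have h2 := congrArg ENNReal.toReal hcount
    rwa [ENNReal.toReal_mul, ENNReal.toReal_mul, ENNReal.toReal_inv,
      ENNReal.toReal_natCast, ENNReal.toReal_one] at h2
  -- the outer integral
  have houter : (∫ k₁ : K, (∫ k₂ : K, f ((k₁ : G) * m * (k₂ : G)) ∂ν) ∂ν)
      = ∑ q ∈ Vf, (ν (U q)).toReal •
          (a⁻¹ • ∫ x in (QuotientGroup.mk ⁻¹' {q} : Set G), f x ∂μ) := by
    have hfun : (fun k₁ : K => ∫ k₂ : K, f ((k₁ : G) * m * (k₂ : G)) ∂ν)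
        = fun k₁ => ∑ q ∈ Vf, Set.indicator (U q)
            (fun _ => a⁻¹ • ∫ x in (QuotientGroup.mk ⁻¹' {q} : Set G), f x ∂μ) k₁ := by
      funext k₁
      rw [hF k₁, Finset.sum_eq_single (QuotientGroup.mk ((k₁ : G) * m) : G ⧸ K)]
      · rw [Set.indicator_of_mem (show k₁ ∈ U (QuotientGroup.mk ((k₁ : G) * m)) from rfl)]
      · intro q hq hne
        apply Set.indicator_of_notMem
        intro hmem
        have h1 : (QuotientGroup.mk ((k₁ : G) * m) : G ⧸ K) = q := hmem
        exact hne h1.symm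
      · intro hnot
        exact absurd (hUcover k₁) hnot
    rw [hfun, integral_finset_sum]
    · exact Finset.sum_congr rfl fun q hq => integral_indicator_const _ (hU_meas q)
    · intro q hq
      exact (integrable_indicator_iff (hU_meas q)).2
        (integrableOn_const (measure_lt_top ν _).ne)
  rw [hsplit, houter, Finset.mul_sum]
  apply Finset.sum_congr rfl
  intro q hq
  have hscal : (μ D).toReal * (ν (U q)).toReal * a⁻¹ = 1 := by
    rw [hμD_toReal, hνU_toReal q hq]
    calc (Vf.card : ℝ) * a * (a⁻¹ * b) * a⁻¹
        = ((Vf.card : ℝ) * (a⁻¹ * b)) * (a * a⁻¹) := by ring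
      _ = 1 := by rw [hcountR, mul_inv_cancel₀ ha, one_mul]
  rw [← Complex.real_smul, smul_smul, smul_smul, hscal, one_smul]


/-- Let `G` be a locally compact Hausdorff unimodular topological group with Haar measure `μ`,
`K` a compact open subgroup with Haar probability measure `ν`, and `S` a countable subset of `G`
such that `G` is the disjoint union of the double cosets `KmK`, `m ∈ S`.  Then for every
`f ∈ L¹(G, μ)`,
`∫_G f dμ = Σ_{m ∈ S} μ(KmK) · ∫_K ∫_K f(k₁ m k₂) dk₁ dk₂`,
with the sum converging absolutely. -/
theorem integral_eq_tsum_double_cosets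
    {G : Type*} [Group G] [TopologicalSpace G] [IsTopologicalGroup G]
    [T2Space G] [LocallyCompactSpace G]
    [MeasurableSpace G] [BorelSpace G]
    (μ : Measure G) [μ.IsHaarMeasure] [μ.IsMulRightInvariant]
    (K : Subgroup G) (hKcompact : IsCompact (K : Set G)) (hKopen : IsOpen (K : Set G))
    (ν : Measure K) [ν.IsHaarMeasure] [IsProbabilityMeasure ν]
    (S : Set G) (hScount : S.Countable)
    (hcover : ∀ x : G, ∃ m ∈ S, ∃ k₁ ∈ K, ∃ k₂ ∈ K, x = k₁ * m * k₂)
    (hdisj : ∀ m ∈ S, ∀ m' ∈ S, m ≠ m' →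
      Disjoint {x : G | ∃ k₁ ∈ K, ∃ k₂ ∈ K, x = k₁ * m * k₂}
        {x : G | ∃ k₁ ∈ K, ∃ k₂ ∈ K, x = k₁ * m' * k₂})
    (f : G → ℂ) (hf : Integrable f μ) :
    (∫ x, f x ∂μ
       = ∑' m : S, ((μ {x : G | ∃ k₁ ∈ K, ∃ k₂ ∈ K, x = k₁ * (m : G) * k₂}).toReal : ℂ)
           * ∫ k₁ : K, ∫ k₂ : K, f ((k₁ : G) * (m : G) * (k₂ : G)) ∂ν ∂ν)
    ∧ Summable (fun m : S =>
        (μ {x : G | ∃ k₁ ∈ K, ∃ k₂ ∈ K, x = k₁ * (m : G) * k₂}).toReal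
          * ‖∫ k₁ : K, ∫ k₂ : K, f ((k₁ : G) * (m : G) * (k₂ : G)) ∂ν ∂ν‖) := by
  haveI : Countable ↑S := hScount.to_subtype
  let D : G → Set G := fun m => {x : G | ∃ k₁ ∈ K, ∃ k₂ ∈ K, x = k₁ * m * k₂}
  have hDopen : ∀ m : G, IsOpen (D m) := by
    intro m
    have hDU : D m = ⋃ k : K, (fun x : G => x * (k : G)⁻¹ * m⁻¹) ⁻¹' (K : Set G) := by
      ext x
      simp only [Set.mem_iUnion, Set.mem_preimage, SetLike.mem_coe]
      constructor
      · rintro ⟨k₁, h1, k₂, h2, rfl⟩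
        refine ⟨⟨k₂, h2⟩, ?_⟩
        show k₁ * m * k₂ * k₂⁻¹ * m⁻¹ ∈ K
        have hg : k₁ * m * k₂ * k₂⁻¹ * m⁻¹ = k₁ := by group
        rw [hg]
        exact h1
      · rintro ⟨k, hk⟩
        exact ⟨x * (k : G)⁻¹ * m⁻¹, hk, (k : G), k.2, by group⟩
    rw [hDU]
    exact isOpen_iUnion fun k => hKopen.preimage (by fun_prop)
  have hDmeas : ∀ m : G, MeasurableSet (D m) := fun m => (hDopen m).measurableSet
  have hDdisj : Pairwise (Disjoint on fun m : S => D (m : G)) := by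
    intro i j hij
    exact hdisj i i.2 j j.2 fun h => hij (Subtype.ext h)
  have hDunion : ⋃ m : S, D (m : G) = Set.univ := by
    ext x
    simp only [Set.mem_iUnion, Set.mem_univ, iff_true]
    obtain ⟨m, hm, k₁, h1, k₂, h2, rfl⟩ := hcover x
    exact ⟨⟨m, hm⟩, k₁, h1, k₂, h2, rfl⟩
  have hInt : IntegrableOn f (⋃ m : S, D (m : G)) μ := by
    rw [hDunion]
    exact hf.integrableOn
  have hsum := hasSum_integral_iUnion (fun m : S => hDmeas _) hDdisj hInt
  rw [hDunion, setIntegral_univ] at hsum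
  constructor
  · rw [← hsum.tsum_eq]
    exact tsum_congr fun m => key_double_coset μ K hKcompact hKopen ν f hf (m : G)
  · have hIntn : IntegrableOn (fun x => ‖f x‖) (⋃ m : S, D (m : G)) μ := by
      rw [hDunion]
      exact hf.norm.integrableOn
    have hsumnorm := hasSum_integral_iUnion (fun m : S => hDmeas _) hDdisj hIntn
    apply Summable.of_nonneg_of_le
      (fun m => mul_nonneg ENNReal.toReal_nonneg (norm_nonneg _))
      (fun m => ?_) hsumnorm.summable
    have hkey := key_double_coset μ K hKcompact hKopen ν f hf (m : G)
    calc (μ (D (m : G))).toReal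
          * ‖∫ k₁ : K, ∫ k₂ : K, f ((k₁ : G) * (m : G) * (k₂ : G)) ∂ν ∂ν‖
        = ‖((μ (D (m : G))).toReal : ℂ)
            * ∫ k₁ : K, ∫ k₂ : K, f ((k₁ : G) * (m : G) * (k₂ : G)) ∂ν ∂ν‖ := by
          rw [norm_mul, Complex.norm_real, Real.norm_eq_abs,
            abs_of_nonneg ENNReal.toReal_nonneg]
      _ = ‖∫ x in D (m : G), f x ∂μ‖ := by rw [hkey]
      _ ≤ ∫ x in D (m : G), ‖f x‖ ∂μ := norm_integral_le_integral_norm f
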